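/- Define f(x,y) = sqrt((x/y)^2 + 4x/y) - x/y for x, y > 0. Then f is strictly increasing in x and strictly decreasing in y. -/

import Mathlib

lemma stmt9_rw (t : ℝ) (ht : 0 < t) :
    Real.sqrt (t ^ 2 + 4 * t) - t = 4 / (Real.sqrt (1 + 4 / t) + 1) := by
  have h1 : Real.sqrt (t ^ 2 + 4 * t) = t * Real.sqrt (1 + 4 / t) := by
    rw [← Real.sqrt_sq ht.le, ← Real.sqrt_mul (sq_nonneg t)]
    congr 1
    field_simp
    ring
    exact Real.sq_sqrt (sq_nonneg t)
  have hs : 0 < Real.sqrt (1 + 4 / t) + 1 := by positivity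
  have hsq : Real.sqrt (1 + 4 / t) ^ 2 = 1 + 4 / t :=
    Real.sq_sqrt (by positivity)
  have ht4 : t * (1 + 4 / t) = t + 4 := by field_simp
  rw [h1, eq_div_iff hs.ne']
  nlinarith [hsq, ht4]

lemma stmt9_key {a b : ℝ} (ha : 0 < a) (hab : a < b) :
    Real.sqrt (a ^ 2 + 4 * a) - a < Real.sqrt (b ^ 2 + 4 * b) - b := by
  have hb : 0 < b := ha.trans hab
  rw [stmt9_rw a ha, stmt9_rw b hb]
  have h1 : 1 + 4 / b < 1 + 4 / a := by
    have := div_lt_div_of_pos_left (by norm_num : (0:ℝ) < 4) ha hab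
    linarith
  have h2 : Real.sqrt (1 + 4 / b) + 1 < Real.sqrt (1 + 4 / a) + 1 := by
    have := Real.sqrt_lt_sqrt (by positivity) h1
    linarith
  exact div_lt_div_of_pos_left (by norm_num) (by positivity) h2

/-- `f (x,y) = √((x/y)^2 + 4x/y) - x/y` (for `x, y > 0`) is strictly increasing
in `x` and strictly decreasing in `y`. -/
theorem stmt_9 :
    (∀ y : ℝ, 0 < y →
      StrictMonoOn (fun x : ℝ => Real.sqrt ((x / y) ^ 2 + 4 * x / y) - x / y)
        (Set.Ioi (0:ℝ))) ∧
    (∀ x : ℝ, 0 < x →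
      StrictAntiOn (fun y : ℝ => Real.sqrt ((x / y) ^ 2 + 4 * x / y) - x / y)
        (Set.Ioi (0:ℝ))) := by
  constructor
  · intro y hy x₁ hx₁ x₂ _ hlt
    have h := stmt9_key (a := x₁ / y) (b := x₂ / y)
      (div_pos (Set.mem_Ioi.mp hx₁) hy) (by gcongr)
    simpa [mul_div_assoc] using h
  · intro x hx y₁ hy₁ y₂ hy₂ hlt
    have hy₁' := Set.mem_Ioi.mp hy₁
    have hy₂' := Set.mem_Ioi.mp hy₂
    have h := stmt9_key (a := x / y₂) (b := x / y₁)
      (div_pos hx hy₂') (by gcongr)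
    simpa [mul_div_assoc] using h
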